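/- Let k ≥ 2 be an integer and let π be the PageRank vector of Γ(k) for α = 1 − 1/k. Then ∑_{i=1}^{k} π_{Bi} < (π_{C2}/6 + 5·π_{C2}/(6k)) · 3/(1 − 1/k). -/

import Mathlib

/-- Arc relation of the graph `Γ(k)` on vertex indices `0, ..., k+2`, where
vertex `0` is `C1`, vertex `1` is `C2`, vertex `i+1` is `B_i` for `1 ≤ i ≤ k`,
and vertex `k+2` is `A`.  `PRadj k j i` holds iff there is an arc from `j` to `i`. -/
def PRadj (k j i : ℕ) : Prop :=
  (j = 0 ∧ (i = 0 ∨ i = 1)) ∨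
  (j = 1 ∧ (i = 0 ∨ i = 1 ∨ i = 2)) ∨
  (2 ≤ j ∧ j ≤ k + 1 ∧ (i = 0 ∨ i = 1 ∨ i = j + 1)) ∨
  (j = k + 2 ∧ i = k + 2)

instance (k j i : ℕ) : Decidable (PRadj k j i) := by unfold PRadj; infer_instance

/-- Out-degree of vertex `j` in `Γ(k)`:  `deg(C1) = 2`, `deg(A) = 1`, all others `3`. -/
def PRdeg (k j : ℕ) : ℕ := if j = 0 then 2 else if j = k + 2 then 1 else 3

/-- The PageRank matrix `R_α` of `Γ(k)`:  entry `(i, j)` is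
`α / deg(j) + (1 - α)/(k+3)` if there is an arc from `j` to `i`, and `(1 - α)/(k+3)`
otherwise. -/
noncomputable def PRmat (k : ℕ) (α : ℝ) : Matrix (Fin (k + 3)) (Fin (k + 3)) ℝ :=
  fun i j =>
    if PRadj k j.1 i.1 then α / (PRdeg k j.1 : ℝ) + (1 - α) / ((k : ℝ) + 3)
    else (1 - α) / ((k : ℝ) + 3)

/-- `π` is a PageRank vector of `Γ(k)` for jumping parameter `α`:  it has nonnegative
entries summing to `1` and satisfies `R_α π = π`. -/
def IsPageRank (k : ℕ) (α : ℝ) (π : Fin (k + 3) → ℝ) : Prop :=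
  (∀ v, 0 ≤ π v) ∧ (∑ v, π v = 1) ∧ (PRmat k α).mulVec π = π



lemma PR_sum_split (k : ℕ) (f : Fin (k+3) → ℝ) :
    ∑ v, f v = f ⟨0, by omega⟩ + f ⟨1, by have := k.zero_le; omega⟩ +
      (∑ i : Fin k, f ⟨i.1 + 2, by have := i.2; omega⟩) + f ⟨k+2, by omega⟩ := by
  rw [Fin.sum_univ_succ, Fin.sum_univ_succ, Fin.sum_univ_castSucc]
  have h0 : (0 : Fin (k+3)) = ⟨0, by omega⟩ := rfl
  have h1 : ((0 : Fin (k+2)).succ) = (⟨1, by omega⟩ : Fin (k+3)) := rfl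
  have h2 : ∀ i : Fin k, ((i.castSucc).succ.succ) = (⟨i.1+2, by omega⟩ : Fin (k+3)) := by
    intro i; ext; simp
  have h3 : ((Fin.last k).succ.succ) = (⟨k+2, by omega⟩ : Fin (k+3)) := by ext; simp
  simp only [h0, h1, h3]
  rw [Finset.sum_congr rfl (fun i _ => by rw [h2 i])]
  ring

lemma PR_comp_eq (k : ℕ) (hk : 2 ≤ k) (α : ℝ) (π : Fin (k + 3) → ℝ)
    (hmul : (PRmat k α).mulVec π = π)
    (i0 : ℕ) (h : i0 < k + 3) (hi0 : i0 = 0 ∨ i0 = 1) :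
    π ⟨i0, h⟩ = (α/2 + (1-α)/((k:ℝ)+3)) * π ⟨0, by omega⟩
      + (α/3 + (1-α)/((k:ℝ)+3)) * π ⟨1, by have := k.zero_le; omega⟩
      + (α/3 + (1-α)/((k:ℝ)+3)) * (∑ i : Fin k, π ⟨i.1 + 2, by have := i.2; omega⟩)
      + ((1-α)/((k:ℝ)+3)) * π ⟨k+2, by omega⟩ := by
  have hc := congrFun hmul ⟨i0, h⟩
  rw [Matrix.mulVec, dotProduct] at hc
  rw [← hc, PR_sum_split k (fun j => PRmat k α ⟨i0, h⟩ j * π j)]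
  have e0 : PRmat k α ⟨i0, h⟩ ⟨0, by omega⟩ = α / 2 + (1-α)/((k:ℝ)+3) := by
    simp only [PRmat, PRdeg]
    rw [if_pos (show PRadj k 0 i0 by unfold PRadj; omega)]
    norm_num
  have e1 : PRmat k α ⟨i0, h⟩ ⟨1, by omega⟩ = α / 3 + (1-α)/((k:ℝ)+3) := by
    simp only [PRmat, PRdeg]
    rw [if_pos (show PRadj k 1 i0 by unfold PRadj; omega)]
    norm_num
  have e2 : ∀ i : Fin k, PRmat k α ⟨i0, h⟩ ⟨i.1 + 2, by omega⟩
      = α / 3 + (1-α)/((k:ℝ)+3) := by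
    intro i
    have hi := i.2
    simp only [PRmat, PRdeg]
    rw [if_pos (show PRadj k (i.1+2) i0 by unfold PRadj; omega), if_neg (by omega),
      if_neg (by omega)]
    norm_num
  have e3 : PRmat k α ⟨i0, h⟩ ⟨k+2, by omega⟩ = (1-α)/((k:ℝ)+3) := by
    simp only [PRmat]
    rw [if_neg (show ¬ PRadj k (k+2) i0 by unfold PRadj; omega)]
  rw [e0, e1, e3, Finset.sum_congr rfl (fun i _ => by rw [e2 i]), ← Finset.mul_sum]

lemma PR_final (kr p S pA c : ℝ) (hkr : 2 ≤ kr) (hc : 0 < c)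
    (heq : p = ((1 - 1/kr)/2 + c) * p + ((1 - 1/kr)/3 + c) * p
      + ((1 - 1/kr)/3 + c) * S + c * pA)
    (htot : p + p + S + pA = 1) :
    S < (p/6 + 5*p/(6*kr)) * 3 / (1 - 1/kr) := by
  have hkr0 : (0:ℝ) < kr := by linarith
  have hα : 0 < 1 - 1/kr := by
    have : 1/kr ≤ 1/2 := by
      rw [div_le_div_iff₀ hkr0 (by norm_num)]; linarith
    linarith
  rw [lt_div_iff₀ hα]
  have h2 : c*p + c*p + c*S + c*pA = c := by
    have : c*p + c*p + c*S + c*pA = c * (p + p + S + pA) := by ring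
    rw [this, htot, mul_one]
  have e5 : 5*p/(6*kr) = 5*p*(1/kr)/6 := by
    rw [mul_one_div, div_div, mul_comm kr 6]
  rw [e5]
  nlinarith [heq, h2, hc]


/-- For `k ≥ 2` and `α = 1 - 1/k`, the PageRank vector satisfies
`∑_{i=1}^k π_{Bi} < (π_{C2}/6 + 5·π_{C2}/(6k)) · 3/(1 - 1/k)`. -/
theorem pagerank_sum_Bi_upper_bound (k : ℕ) (hk : 2 ≤ k) (π : Fin (k + 3) → ℝ)
    (hπ : IsPageRank k (1 - 1 / (k : ℝ)) π) :
    (∑ i : Fin k, π ⟨i.1 + 2, by omega⟩) <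
      (π ⟨1, by omega⟩ / 6 + 5 * π ⟨1, by omega⟩ / (6 * (k : ℝ))) * 3
        / (1 - 1 / (k : ℝ)) := by
  obtain ⟨hpos, hsum, hmul⟩ := hπ
  have hkr : (2:ℝ) ≤ (k:ℝ) := by exact_mod_cast hk
  have hc : 0 < (1 - (1 - 1/(k:ℝ)))/((k:ℝ)+3) := by
    have e : (1 - (1 - 1/(k:ℝ)))/((k:ℝ)+3) = (1/(k:ℝ))/((k:ℝ)+3) := by ring_nf
    rw [e]
    have : (0:ℝ) < (k:ℝ) := by linarith
    positivity
  have h0 := PR_comp_eq k hk (1 - 1/(k:ℝ)) π hmul 0 (by omega) (Or.inl rfl)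
  have h1 := PR_comp_eq k hk (1 - 1/(k:ℝ)) π hmul 1 (by omega) (Or.inr rfl)
  have hpp : π (⟨0, by omega⟩ : Fin (k+3)) = π ⟨1, by omega⟩ := h0.trans h1.symm
  rw [hpp] at h1
  have htot : π (⟨1, by omega⟩ : Fin (k+3)) + π ⟨1, by omega⟩
      + (∑ i : Fin k, π ⟨i.1 + 2, by omega⟩) + π ⟨k+2, by omega⟩ = 1 := by
    rw [PR_sum_split k π, hpp] at hsum
    exact hsum
  exact PR_final (k:ℝ) (π ⟨1, by omega⟩) (∑ i : Fin k, π ⟨i.1 + 2, by omega⟩)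
    (π ⟨k+2, by omega⟩) ((1 - (1 - 1/(k:ℝ)))/((k:ℝ)+3)) hkr hc h1 htot
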